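/- Let K be a perfect field of characteristic 2, V a K-vector space, Q : V → K a quadratic form, and φ its polar form. If Q is non-singular, i.e. the only vector v ∈ Rad(φ) with Q(v) = 0 is v = 0, then dim Rad(φ) ≤ 1; moreover, if dim Rad(φ) = 1, then every 2-dimensional subspace of V containing Rad(φ) contains exactly one 1-dimensional subspace consisting of singular vectors (i.e. vectors v with Q(v) = 0). -/

import Mathlib

open Cardinal


/-- Let `K` be a perfect field of characteristic 2, `Q : V → K` a quadratic
form with (bilinear) polar form `φ(x,y) = Q(x+y) − Q(x) − Q(y)`. If `Q` is non-singular
(the only vector of `Rad(φ)` on which `Q` vanishes is `0`), then `dim Rad(φ) ≤ 1`;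
moreover, if `dim Rad(φ) = 1`, then every 2-dimensional subspace of `V` containing
`Rad(φ)` contains exactly one 1-dimensional subspace consisting of singular vectors. -/
theorem stmt_19 {K : Type*} [Field K] {V : Type*} [AddCommGroup V] [Module K V]
    (hchar : ringChar K = 2) (hperf : ∀ a : K, ∃ b : K, b * b = a)
    (Q : V → K) (hQhom : ∀ (t : K) (x : V), Q (t • x) = t * t * Q x)
    (hQpolar : ∀ (t : K) (x x' y : V),
      Q (t • x + x' + y) - Q (t • x + x') - Q y =
        t * (Q (x + y) - Q x - Q y) + (Q (x' + y) - Q x' - Q y))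
    (R : Submodule K V)
    (hR : (R : Set V) = {a : V | ∀ x : V, Q (a + x) - Q a - Q x = 0})
    (hns : ∀ v ∈ R, Q v = 0 → v = 0) :
    Module.rank K ↥R ≤ 1 ∧
      (Module.rank K ↥R = 1 →
        ∀ l : Submodule K V, Module.rank K ↥l = 2 → R ≤ l →
          ∃! p : Submodule K V, p ≤ l ∧ Module.rank K ↥p = 1 ∧ ∀ v ∈ p, Q v = 0) := by
  haveI : CharP K 2 := hchar ▸ ringChar.charP K
  have htwo : ∀ x : K, x + x = 0 := fun x => by
    rw [← two_mul, (by exact_mod_cast CharP.cast_eq_zero K 2 : (2 : K) = 0), zero_mul]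
  have hadd : ∀ a ∈ R, ∀ x : V, Q (a + x) = Q a + Q x := by
    intro a ha x
    have h : Q (a + x) - Q a - Q x = 0 := by
      have : a ∈ (R : Set V) := ha
      rw [hR] at this
      exact this x
    linear_combination h
  -- key lemma: every element of R is a multiple of a fixed anisotropic element of R
  have key : ∀ e ∈ R, Q e ≠ 0 → ∀ a ∈ R, ∃ c : K, a = c • e := by
    intro e he hQe a ha
    obtain ⟨b, hb⟩ := hperf (Q a * (Q e)⁻¹)
    have h1 : Q (a + b • e) = 0 := by
      rw [hadd a ha, hQhom, hb, inv_mul_cancel_right₀ hQe]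
      exact htwo (Q a)
    have h2 : a + b • e ∈ R := R.add_mem ha (R.smul_mem b he)
    have h3 : a + b • e = 0 := hns _ h2 h1
    exact ⟨-b, by rw [neg_smul]; exact eq_neg_of_add_eq_zero_left h3⟩
  constructor
  · -- rank R ≤ 1
    by_cases hbot : R = ⊥
    · rw [hbot]
      simp [rank_bot]
    · obtain ⟨e, he, hene⟩ := R.ne_bot_iff.mp hbot
      have hQe : Q e ≠ 0 := fun h => hene (hns e he h)
      have hRle : R ≤ Submodule.span K {e} := by
        intro a ha
        obtain ⟨c, hc⟩ := key e he hQe a ha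
        rw [hc]
        exact Submodule.smul_mem _ _ (Submodule.subset_span rfl)
      calc Module.rank K ↥R ≤ Module.rank K ↥(Submodule.span K ({e} : Set V)) :=
            Submodule.rank_mono hRle
        _ ≤ #({e} : Set V) := rank_span_le _
        _ = 1 := Cardinal.mk_singleton e
  · -- uniqueness part
    intro hrk1 l hl2 hRl
    have hbot : R ≠ ⊥ := by
      intro h
      rw [h] at hrk1
      simp [rank_bot] at hrk1
    obtain ⟨e, he, hene⟩ := R.ne_bot_iff.mp hbot
    have hQe : Q e ≠ 0 := fun h => hene (hns e he h)
    have hel : e ∈ l := hRl he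
    -- find f ∈ l \ R
    have hex : ∃ f ∈ l, f ∉ R := by
      by_contra h
      push_neg at h
      have hle : l ≤ R := h
      have : (2 : Cardinal) ≤ 1 := by
        calc (2 : Cardinal) = Module.rank K ↥l := hl2.symm
          _ ≤ Module.rank K ↥R := Submodule.rank_mono hle
          _ = 1 := hrk1
      norm_num at this
    obtain ⟨f, hfl, hfR⟩ := hex
    obtain ⟨b, hb⟩ := hperf (Q f * (Q e)⁻¹)
    set v₀ : V := b • e + f with hv₀def
    have hv₀l : v₀ ∈ l := l.add_mem (l.smul_mem b hel) hfl
    have hQv₀ : Q v₀ = 0 := by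
      rw [hv₀def, hadd (b • e) (R.smul_mem b he), hQhom, hb, inv_mul_cancel_right₀ hQe]
      exact htwo (Q f)
    have hv₀R : v₀ ∉ R := by
      intro h
      have hfeq : v₀ - b • e = f := by rw [hv₀def]; abel
      exact hfR (hfeq ▸ R.sub_mem h (R.smul_mem b he))
    have hv₀ne : v₀ ≠ 0 := fun h => hv₀R (h ▸ R.zero_mem)
    -- R = span {e}
    have hRspan : R = Submodule.span K {e} := by
      apply le_antisymm
      · intro a ha
        obtain ⟨c, hc⟩ := key e he hQe a ha
        rw [hc]
        exact Submodule.smul_mem _ _ (Submodule.subset_span rfl)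
      · rw [Submodule.span_le, Set.singleton_subset_iff]
        exact he
    -- e ∉ span {v₀}
    have heNspan : e ∉ Submodule.span K ({v₀} : Set V) := by
      intro h
      rw [Submodule.mem_span_singleton] at h
      obtain ⟨c, hc⟩ := h
      have hc0 : c ≠ 0 := by
        rintro rfl
        rw [zero_smul] at hc
        exact hene hc.symm
      apply hv₀R
      rw [hRspan, Submodule.mem_span_singleton]
      exact ⟨c⁻¹, by rw [← hc, smul_smul, inv_mul_cancel₀ hc0, one_smul]⟩
    -- l = span {e, v₀}
    have hind : LinearIndependent K ((↑) : ({e, v₀} : Set V) → V) := by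
      have h1 : LinearIndependent K ((↑) : ({v₀} : Set V) → V) :=
        LinearIndepOn.singleton (v := id) hv₀ne
      exact LinearIndepOn.id_insert h1 heNspan
    have hev : e ∉ ({v₀} : Set V) := by
      simp only [Set.mem_singleton_iff]
      intro h
      exact hv₀R (h ▸ he)
    have hrkspan : Module.rank K ↥(Submodule.span K ({e, v₀} : Set V)) = 2 := by
      rw [rank_span_set hind, Cardinal.mk_insert hev, Cardinal.mk_singleton]
      norm_num
    haveI : FiniteDimensional K ↥l :=
      FiniteDimensional.of_rank_eq_nat (n := 2) (by exact_mod_cast hl2)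
    have hfl2 : Module.finrank K ↥l = 2 :=
      Module.finrank_eq_of_rank_eq (by exact_mod_cast hl2)
    have hspanle : Submodule.span K ({e, v₀} : Set V) ≤ l := by
      rw [Submodule.span_le]
      rintro x (rfl | rfl)
      · exact hel
      · exact hv₀l
    have hfspan : Module.finrank K ↥(Submodule.span K ({e, v₀} : Set V)) = 2 :=
      Module.finrank_eq_of_rank_eq (by exact_mod_cast hrkspan)
    have hleq : Submodule.span K ({e, v₀} : Set V) = l :=
      Submodule.eq_of_le_of_finrank_le hspanle (by rw [hfl2, hfspan])
    -- every singular vector in l lies in span {v₀}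
    have hsing : ∀ u ∈ l, Q u = 0 → u ∈ Submodule.span K ({v₀} : Set V) := by
      intro u hul hQu
      rw [← hleq, Submodule.mem_span_pair] at hul
      obtain ⟨a, c, hac⟩ := hul
      have : Q u = a * a * Q e := by
        rw [← hac, hadd (a • e) (R.smul_mem a he), hQhom, hQhom, hQv₀, mul_zero, add_zero]
      have ha0 : a = 0 := by
        have h0 : a * a * Q e = 0 := by rw [← this, hQu]
        rcases mul_eq_zero.mp h0 with h | h
        · exact mul_self_eq_zero.mp h
        · exact absurd h hQe
      rw [Submodule.mem_span_singleton]
      exact ⟨c, by rw [← hac, ha0, zero_smul, zero_add]⟩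
    refine ⟨Submodule.span K ({v₀} : Set V), ⟨?_, ?_, ?_⟩, ?_⟩
    · rw [Submodule.span_le, Set.singleton_subset_iff]
      exact hv₀l
    · rw [rank_span_set (LinearIndepOn.singleton (v := id) hv₀ne), Cardinal.mk_singleton]
    · intro v hv
      rw [Submodule.mem_span_singleton] at hv
      obtain ⟨c, hc⟩ := hv
      rw [← hc, hQhom, hQv₀, mul_zero]
    · rintro p ⟨hpl, hp1, hpsing⟩
      apply le_antisymm
      · intro u hu
        exact hsing u (hpl hu) (hpsing u hu)
      · have hpbot : p ≠ ⊥ := by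
          intro h
          rw [h] at hp1
          simp [rank_bot] at hp1
        obtain ⟨w, hw, hwne⟩ := p.ne_bot_iff.mp hpbot
        have hwspan := hsing w (hpl hw) (hpsing w hw)
        rw [Submodule.mem_span_singleton] at hwspan
        obtain ⟨c, hc⟩ := hwspan
        have hc0 : c ≠ 0 := by
          rintro rfl
          rw [zero_smul] at hc
          exact hwne hc.symm
        rw [Submodule.span_le, Set.singleton_subset_iff]
        have : v₀ = c⁻¹ • w := by rw [← hc, smul_smul, inv_mul_cancel₀ hc0, one_smul]
        rw [this]
        exact p.smul_mem _ hw
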